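/- Let σ be a finite sequence of signs in {+, −} whose last sign is −, with k minus signs (k ≥ 1) and k+s plus signs (k+s ≥ 0). Then the minimum n for which there exists a binary sequence x of length n with x_n = 0 and signature σ(x) = σ equals 3k + s, and this minimum does not depend on the order of the signs in σ among sequences ending in −. -/

import Mathlib

/-- The signature of a binary sequence `x` of length `n`: scan consecutive pairs in order,
recording `true` (a plus sign) for each pair `(1,1)` and `false` (a minus sign) for each pair
`(1,0)`, ignoring pairs whose first entry is `0`. -/
def signSeq (n : ℕ) (x : Fin n → Bool) : List Bool :=
  (List.ofFn fun i : Fin (n - 1) =>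
    if x ⟨i.val, by have := i.isLt; omega⟩ = true then
      some (x ⟨i.val + 1, by have := i.isLt; omega⟩)
    else none).reduceOption

def sig : List Bool → List Bool
  | [] => []
  | [_] => []
  | a :: b :: l => (if a then [b] else []) ++ sig (b :: l)

lemma signSeq_eq_sig : ∀ n, ∀ x : Fin n → Bool, signSeq n x = sig (List.ofFn x)
  | 0, x => rfl
  | 1, x => by
    show List.reduceOption (List.ofFn (fun i : Fin 0 => _)) = _
    simp [List.ofFn_succ, sig]
  | (n+2), x => by
    have ih := signSeq_eq_sig (n+1) (fun i => x i.succ)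
    show List.reduceOption (List.ofFn (fun i : Fin (n+1) => _)) = _
    rw [List.ofFn_succ]
    have hL : signSeq (n+1) (fun i => x i.succ) =
        List.reduceOption (List.ofFn fun i : Fin n =>
          if x ⟨i.val + 1, by omega⟩ = true then some (x ⟨i.val + 2, by omega⟩) else none) := rfl
    rw [List.ofFn_succ (f := x), List.ofFn_succ (f := fun i : Fin (n+1) => x i.succ)]
    have key : (List.ofFn fun i : Fin n =>
        if x ⟨(Fin.succ i).val, by omega⟩ = true then some (x ⟨(Fin.succ i).val + 1, by omega⟩) else none)
        = (List.ofFn fun i : Fin n =>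
          if x ⟨i.val + 1, by omega⟩ = true then some (x ⟨i.val + 2, by omega⟩) else none) := rfl
    by_cases hx : x ⟨↑(0 : Fin (n+1)), by omega⟩ = true
    · rw [if_pos hx, List.reduceOption_cons_of_some, key, ← hL, ih]
      have h0 : x 0 = true := hx
      simp [sig, h0]
    · rw [if_neg hx, List.reduceOption_cons_of_none, key, ← hL, ih]
      have h0 : x 0 = false := by simpa using hx
      simp [sig, h0]

lemma count_tf (l : List Bool) : l.count true + l.count false = l.length := by
  induction l with
  | nil => simp
  | cons a l ih => cases a <;> simp [List.count_cons] <;> omega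

lemma sig_length : ∀ L : List Bool, L.getLast? = some false →
    L.length = (sig L).length + L.count false := by
  intro L
  induction L using sig.induct with
  | case1 => simp
  | case2 a => intro h; simp at h; simp [sig, h]
  | case3 a b l ih =>
    intro h
    rw [List.getLast?_cons_cons] at h
    have := ih h
    cases a <;> simp [sig, List.count_cons, this] <;> omega

lemma sig_count : ∀ L : List Bool, (sig L).count false ≤ L.tail.count false := by
  intro L
  induction L using sig.induct with
  | case1 => simp [sig]
  | case2 a => simp [sig]
  | case3 a b l ih =>
    have h : (b :: l).tail = l := rfl
    rw [h] at ih
    cases a <;> cases b <;> simp [sig, List.count_cons] at * <;> omega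

def enc : List Bool → List Bool
  | [] => []
  | true :: l => true :: enc l
  | false :: l => true :: false :: enc l

lemma enc_length : ∀ l : List Bool, (enc l).length = l.count true + 2 * l.count false := by
  intro l
  induction l with
  | nil => simp [enc]
  | cons a l ih => cases a <;> simp [enc, List.count_cons, ih] <;> omega

lemma enc_spec : ∀ l : List Bool, l.getLast? = some false →
    (∃ r, enc l = true :: r) ∧ sig (enc l) = l ∧ (enc l).getLast? = some false := by
  intro l
  induction l with
  | nil => intro h; simp at h
  | cons a l ih =>
    intro h
    cases l with
    | nil =>
      simp at h
      subst h
      exact ⟨⟨[false], rfl⟩, rfl, rfl⟩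
    | cons b l' =>
      rw [List.getLast?_cons_cons] at h
      obtain ⟨⟨r, hr⟩, hs, hlast⟩ := ih h
      cases a with
      | true =>
        refine ⟨⟨enc (b :: l'), rfl⟩, ?_, ?_⟩
        · show sig (true :: enc (b :: l')) = _
          rw [hr]
          show true :: sig (true :: r) = _
          rw [← hr, hs]
        · show (true :: enc (b :: l')).getLast? = _
          rw [hr, List.getLast?_cons_cons, ← hr]
          exact hlast
      | false =>
        refine ⟨⟨false :: enc (b :: l'), rfl⟩, ?_, ?_⟩
        · show sig (true :: false :: enc (b :: l')) = _
          rw [hr]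
          show false :: sig (true :: r) = _
          rw [← hr, hs]
        · show (true :: false :: enc (b :: l')).getLast? = _
          rw [hr, List.getLast?_cons_cons, List.getLast?_cons_cons, ← hr]
          exact hlast

/-- Lemma 3 (taily case): if `σ` is a signature whose last sign is a minus, with `k` minus
signs (`k ≥ 1`) and `k + s` plus signs (`k + s ≥ 0`), then the minimum length `n` of a binary
sequence ending in 0 with signature `σ` equals `3k + s`; moreover this minimum is the same
for every rearrangement of the signs of `σ` that also ends in a minus sign. -/
theorem taily_min_length (σ : List Bool) (k : ℕ) (s : ℤ)
    (hlast : σ.getLast? = some false) (hk : 1 ≤ k)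
    (hminus : σ.count false = k) (hplus : (σ.count true : ℤ) = (k : ℤ) + s)
    (hks : 0 ≤ (k : ℤ) + s) :
    ∃ m : ℕ, (m : ℤ) = 3 * (k : ℤ) + s ∧
      ∀ σ' : List Bool, σ'.Perm σ → σ'.getLast? = some false →
        IsLeast {n : ℕ | ∃ x : Fin n → Bool,
          (∀ i : Fin n, (i : ℕ) = n - 1 → x i = false) ∧ signSeq n x = σ'} m := by
  refine ⟨2 * k + σ.count true, by push_cast; omega, ?_⟩
  intro σ' hperm hlast'
  have hcf : σ'.count false = k := by rw [hperm.count_eq]; exact hminus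
  have hct : σ'.count true = σ.count true := hperm.count_eq _
  constructor
  · -- membership
    obtain ⟨⟨r, hr⟩, hs, hl⟩ := enc_spec σ' hlast'
    have hlen : (enc σ').length = 2 * k + σ.count true := by
      rw [enc_length, hcf, hct]; ring
    have hmem : (enc σ').length ∈ {n : ℕ | ∃ x : Fin n → Bool,
        (∀ i : Fin n, (i : ℕ) = n - 1 → x i = false) ∧ signSeq n x = σ'} := by
      refine ⟨(enc σ').get, ?_, ?_⟩
      · intro i hi
        have hne : enc σ' ≠ [] := by rw [hr]; simp
        rw [List.getLast?_eq_getLast hne] at hl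
        have h2 := List.getLast_eq_getElem hne
        have hi' : i = ⟨(enc σ').length - 1, by omega⟩ := Fin.ext hi
        rw [hi']
        rw [h2] at hl
        exact Option.some_injective _ hl
      · rw [signSeq_eq_sig, List.ofFn_get, hs]
    rwa [hlen] at hmem
  · -- lower bound
    rintro n ⟨x, hx0, hxs⟩
    rw [signSeq_eq_sig] at hxs
    set L := List.ofFn x with hL
    have hLlen : L.length = n := List.length_ofFn (f := x)
    cases n with
    | zero =>
      have : L = [] := List.eq_nil_of_length_eq_zero hLlen
      rw [this] at hxs
      rw [← hxs] at hlast'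
      simp [sig] at hlast'
    | succ n =>
      have hne : L ≠ [] := by
        intro h; rw [h] at hLlen; simp at hLlen
      have hlastL : L.getLast? = some false := by
        have hx := hx0 ⟨n, by omega⟩ rfl
        rw [hL, List.getLast?_eq_getElem?, List.length_ofFn,
          show n + 1 - 1 = n from rfl, List.getElem?_ofFn]
        simp [List.ofFnNthVal, hx]
      have h1 := sig_length L hlastL
      have h2 := sig_count L
      have h3 : L.tail.count false ≤ L.count false :=
        (List.tail_sublist L).count_le _
      have h4 := count_tf σ'
      rw [hxs] at h1 h2
      omega
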